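/- arXiv:math/9901010 — 3 statements merged into one kernel-verified Lean document; each statement's English description precedes it below -/
import Mathlib

section
/- Let 𝓛 be a commuting family of m holomorphic vector fields on a complex manifold with flow (w,q) ↦ 𝓛_w(q), let Γ : W' → 𝓜 be a holomorphic map from an open subset of ℂ^{m'} with Γ(0) = 0, and define φ(w, w') := 𝓛_w(Γ(w')). Then φ attains its maximal (generic) rank at some point of the form (0, w'^*): that is, sup over (w,w') of rank dφ_{(w,w')} = sup over w' of rank dφ_{(0,w')}. -/
/-- The complexification `𝓜 = {(w,z,ζ,ξ) : z = ξ + i Θ̄(w,ζ,ξ)}`. -/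
def MM (m d : ℕ)
    (Θb : ((Fin m → ℂ) × (Fin m → ℂ) × (Fin d → ℂ)) → Fin d → ℂ) :
    Set ((Fin m → ℂ) × (Fin d → ℂ) × (Fin m → ℂ) × (Fin d → ℂ)) :=
  {q | ∀ k, q.2.1 k = q.2.2.2 k + Complex.I * Θb (q.1, q.2.2.1, q.2.2.2) k}

/-- The joint flow `𝓛_w` of the commuting family `𝓛`. -/
def Lflow (m d : ℕ)
    (Θb : ((Fin m → ℂ) × (Fin m → ℂ) × (Fin d → ℂ)) → Fin d → ℂ)
    (w : Fin m → ℂ)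
    (p : (Fin m → ℂ) × (Fin d → ℂ) × (Fin m → ℂ) × (Fin d → ℂ)) :
    (Fin m → ℂ) × (Fin d → ℂ) × (Fin m → ℂ) × (Fin d → ℂ) :=
  (p.1 + w, fun k => p.2.2.2 k + Complex.I * Θb (p.1 + w, p.2.2.1, p.2.2.2) k,
   p.2.2.1, p.2.2.2)

section Aux

variable (m d : ℕ)
    (Θb : ((Fin m → ℂ) × (Fin m → ℂ) × (Fin d → ℂ)) → Fin d → ℂ)

lemma Lflow_comp (w v : Fin m → ℂ) (p) :
    Lflow m d Θb w (Lflow m d Θb v p) = Lflow m d Θb (v + w) p := by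
  simp [Lflow, add_assoc]

lemma Lflow_diff (hΘb : Differentiable ℂ Θb) (w : Fin m → ℂ) :
    Differentiable ℂ (Lflow m d Θb w) := by
  unfold Lflow; fun_prop

end Aux


/-- for `φ(w,w') := 𝓛_w(Γ(w'))` with `Γ` holomorphic,
`Γ(0) = 0` and `Γ` valued in `𝓜`, the map `φ` attains its maximal (generic)
rank at some point of the form `(0, w'^*)`. -/
theorem stmt_16 (m d m' : ℕ)
    (Θb : ((Fin m → ℂ) × (Fin m → ℂ) × (Fin d → ℂ)) → Fin d → ℂ)
    (hΘb : Differentiable ℂ Θb)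
    (Γ : (Fin m' → ℂ) →
      ((Fin m → ℂ) × (Fin d → ℂ) × (Fin m → ℂ) × (Fin d → ℂ)))
    (hΓ : Differentiable ℂ Γ) (hΓ0 : Γ 0 = 0)
    (hΓM : ∀ w', Γ w' ∈ MM m d Θb) :
    let φ : ((Fin m → ℂ) × (Fin m' → ℂ)) →
        ((Fin m → ℂ) × (Fin d → ℂ) × (Fin m → ℂ) × (Fin d → ℂ)) :=
      fun x => Lflow m d Θb x.1 (Γ x.2)
    let rk : ((Fin m → ℂ) × (Fin m' → ℂ)) → ℕ := fun x =>
      Module.finrank ℂ (LinearMap.range (fderiv ℂ φ x).toLinearMap)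
    ∃ w'star : Fin m' → ℂ,
      rk ((0 : Fin m → ℂ), w'star) = sSup {k | ∃ x, rk x = k} := by
  intro φ rk
  have hφ : Differentiable ℂ φ := by
    simp only [φ]; unfold Lflow; fun_prop
  -- key inequality: rank at (w, w') ≤ rank at (0, w')
  have key : ∀ (w : Fin m → ℂ) (w' : Fin m' → ℂ), rk (w, w') ≤ rk (0, w') := by
    intro w w'
    have hcomp : (fun x : (Fin m → ℂ) × (Fin m' → ℂ) => φ (x + (w, 0)))
        = fun x => Lflow m d Θb w (φ x) := by
      funext x
      show Lflow m d Θb (x.1 + w) (Γ (x.2 + 0)) = _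
      rw [add_zero, ← Lflow_comp]
    have hpt : ((0 : Fin m → ℂ), w') + (w, (0 : Fin m' → ℂ)) = (w, w') := by
      simp
    have hA : HasFDerivAt (fun x : (Fin m → ℂ) × (Fin m' → ℂ) => φ (x + (w, 0)))
        ((fderiv ℂ φ (w, w')).comp (ContinuousLinearMap.id ℂ _)) (0, w') := by
      have h1 : HasFDerivAt (fun x : (Fin m → ℂ) × (Fin m' → ℂ) => x + (w, 0))
          (ContinuousLinearMap.id ℂ _) (0, w') := (hasFDerivAt_id _).add_const _
      have h2 : HasFDerivAt φ (fderiv ℂ φ (w, w'))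
          (((0 : Fin m → ℂ), w') + (w, (0 : Fin m' → ℂ))) := by
        rw [hpt]; exact (hφ _).hasFDerivAt
      exact h2.comp ((0 : Fin m → ℂ), w') h1
    have hB : HasFDerivAt (fun x : (Fin m → ℂ) × (Fin m' → ℂ) => φ (x + (w, 0)))
        ((fderiv ℂ (Lflow m d Θb w) (φ (0, w'))).comp (fderiv ℂ φ (0, w')))
        (0, w') := by
      rw [hcomp]
      exact ((Lflow_diff m d Θb hΘb w (φ (0, w'))).hasFDerivAt).comp _
        (hφ _).hasFDerivAt
    have heq : fderiv ℂ φ (w, w')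
        = (fderiv ℂ (Lflow m d Θb w) (φ (0, w'))).comp (fderiv ℂ φ (0, w')) := by
      have := hA.unique hB
      simpa using this
    show Module.finrank ℂ _ ≤ Module.finrank ℂ _
    rw [heq]
    rw [ContinuousLinearMap.toLinearMap_comp, LinearMap.range_comp]
    exact Submodule.finrank_map_le _ _
  -- the set of ranks
  set S : Set ℕ := {k | ∃ x, rk x = k} with hS
  have hne : S.Nonempty := ⟨rk (0, 0), ⟨(0, 0), rfl⟩⟩
  have hbdd : BddAbove S := by
    refine ⟨Module.finrank ℂ ((Fin m → ℂ) × (Fin d → ℂ) × (Fin m → ℂ) × (Fin d → ℂ)), ?_⟩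
    rintro k ⟨x, rfl⟩
    exact Submodule.finrank_le _
  obtain ⟨x, hx⟩ : ∃ x, rk x = sSup S := Nat.sSup_mem hne hbdd
  refine ⟨x.2, le_antisymm (le_csSup hbdd ⟨(0, x.2), rfl⟩) ?_⟩
  rw [← hx]
  exact key x.1 x.2
end

section
/- For the hypersurface M ⊂ ℂ^2 with complexification 𝓜 = {(w,z,ζ,ξ) : z = ξ + i w²ζ², ξ = z − i ζ² w²} (i.e. M : z = z̄ + i w² w̄²), the fifth concatenated flow map Γ_5 at the origin, viewed in coordinates (w, ζ, ξ) on 𝓜, is a submersion onto 𝓜 at the point (w₁*, w₂*, 0, −w₂*, −w₁*) for any w₁* ≠ 0, w₂* ≠ 0; moreover Γ_5(w₁*, w₂*, 0, −w₂*, −w₁*) = 0. -/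
open ContinuousLinearMap Complex

/-- for `M : z = z̄ + i w² w̄²` in `ℂ²`, the fifth Segre chain
map `Γ₅`, viewed in coordinates `(w,ζ,ξ)` on the 3-dimensional
complexification `𝓜`, satisfies `Γ₅(w₁*, w₂*, 0, −w₂*, −w₁*) = 0` and is a
submersion onto `𝓜` there, for any `w₁* ≠ 0`, `w₂* ≠ 0`. -/
theorem stmt_18 :
    let G : (Fin 5 → ℂ) → (Fin 3 → ℂ) := fun v =>
      ![v 0 + v 2 + v 4,
        v 1 + v 3,
        Complex.I * (v 1) ^ 2 * ((v 2) ^ 2 + 2 * v 0 * v 2)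
          - Complex.I * ((v 1 + v 3) * (v 0 + v 2)) ^ 2]
    ∀ a b : ℂ, a ≠ 0 → b ≠ 0 →
      G ![a, b, 0, -b, -a] = 0 ∧
      Function.Surjective (fderiv ℂ G ![a, b, 0, -b, -a]) := by
  intro G a b ha hb
  set p : Fin 5 → ℂ := ![a, b, 0, -b, -a] with hp
  have hP : (fun i => (ContinuousLinearMap.proj i : (Fin 5 → ℂ) →L[ℂ] ℂ)) = fun i => proj i := rfl
  have hproj : ∀ i : Fin 5, HasFDerivAt (fun v : Fin 5 → ℂ => v i)
      (ContinuousLinearMap.proj i : (Fin 5 → ℂ) →L[ℂ] ℂ) p :=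
    fun i => (ContinuousLinearMap.proj i : (Fin 5 → ℂ) →L[ℂ] ℂ).hasFDerivAt
  -- component derivatives
  have h0 := hproj 0
  have h1 := hproj 1
  have h2 := hproj 2
  have h3 := hproj 3
  have h4 := hproj 4
  set L : Fin 3 → ((Fin 5 → ℂ) →L[ℂ] ℂ) :=
    ![(ContinuousLinearMap.proj 0 : (Fin 5 → ℂ) →L[ℂ] ℂ) + proj 2 + proj 4,
      (ContinuousLinearMap.proj 1 : (Fin 5 → ℂ) →L[ℂ] ℂ) + proj 3,
      (2 * Complex.I * a * b ^ 2) • (ContinuousLinearMap.proj 2 : (Fin 5 → ℂ) →L[ℂ] ℂ)] with hL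
  have hcomb := (((h1.mul h1).const_mul Complex.I).mul
      ((h2.mul h2).add ((h0.const_mul 2).mul h2))).sub
      (((((h1.add h3).mul (h0.add h2)).mul ((h1.add h3).mul (h0.add h2)))).const_mul Complex.I)
  have heq : (fun v : Fin 5 → ℂ =>
      Complex.I * (v 1) ^ 2 * ((v 2) ^ 2 + 2 * v 0 * v 2)
        - Complex.I * ((v 1 + v 3) * (v 0 + v 2)) ^ 2)
      = (fun v : Fin 5 → ℂ =>
      Complex.I * (v 1 * v 1) * (v 2 * v 2 + 2 * v 0 * v 2)
        - Complex.I * ((v 1 + v 3) * (v 0 + v 2) * ((v 1 + v 3) * (v 0 + v 2)))) := by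
    funext v; ring
  have hg2 : HasFDerivAt (fun v : Fin 5 → ℂ =>
      Complex.I * (v 1) ^ 2 * ((v 2) ^ 2 + 2 * v 0 * v 2)
        - Complex.I * ((v 1 + v 3) * (v 0 + v 2)) ^ 2) (L 2) p := by
    rw [heq]
    refine hcomb.congr_fderiv ?_
    ext u
    simp [hL, hp, Matrix.cons_val_zero, Matrix.cons_val_one]
    ring
  have hG : HasFDerivAt G (ContinuousLinearMap.pi L) p := by
    rw [hasFDerivAt_pi']
    intro i
    rw [ContinuousLinearMap.proj_pi]
    fin_cases i
    · exact (h0.add h2).add h4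
    · exact h1.add h3
    · exact hg2
  refine ⟨?_, ?_⟩
  · funext i
    fin_cases i <;> simp [G, hp] <;> ring
  · rw [hG.fderiv]
    intro x
    have hI : Complex.I ≠ 0 := Complex.I_ne_zero
    refine ⟨![0, 0, x 2 / (2 * Complex.I * a * b ^ 2), x 1,
        x 0 - x 2 / (2 * Complex.I * a * b ^ 2)], ?_⟩
    funext i
    fin_cases i <;>
      simp [hL, ContinuousLinearMap.pi_apply] <;>
      field_simp
end

section
/- For the same hypersurface M : z = z̄ + i w² w̄² in ℂ^2, there exists no point w_{(4)}* ∈ ℂ^4 with Γ_4(w_{(4)}*) = 0 at which the differential of Γ_4 has rank 3. Hence the map Γ_4 is never a submersion onto 𝓜 at a preimage of the base point, showing that the odd length 2μ_p − 1 = 5 in the minimality criterion is optimal for this example. -/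
/-- for `M : z = z̄ + i w² w̄²` in `ℂ²`, the fourth Segre chain
map `Γ₄`, viewed in coordinates `(w,z,ζ)` on the 3-dimensional
complexification `𝓜`, is never a submersion at a preimage of the base
point: there is no `w_{(4)}*` with `Γ₄(w_{(4)}*) = 0` at which the
differential of `Γ₄` has rank 3.  Hence the odd length `2μ_p − 1 = 5` in the
minimality criterion is optimal for this example. -/
theorem stmt_19 :
    let G : (Fin 4 → ℂ) → (Fin 3 → ℂ) := fun v =>
      ![v 0 + v 2,
        Complex.I * (v 1) ^ 2 * ((v 2) ^ 2 + 2 * v 0 * v 2),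
        v 1 + v 3]
    ¬ ∃ v : Fin 4 → ℂ, G v = 0 ∧ Function.Surjective (fderiv ℂ G v) := by
  intro G
  rintro ⟨v, hGv, hsurj⟩
  -- extract the equations
  have h0 : v 0 + v 2 = 0 := congrFun hGv 0
  have h1 : Complex.I * (v 1) ^ 2 * ((v 2) ^ 2 + 2 * v 0 * v 2) = 0 := congrFun hGv 1
  -- so v 2 = - v 0 and v1² v0² = 0
  have hv2 : v 2 = -(v 0) := by linear_combination h0
  have hcases : v 1 = 0 ∨ (v 0 = 0 ∧ v 2 = 0) := by
    have hI : (Complex.I : ℂ) ≠ 0 := Complex.I_ne_zero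
    have h1' : (v 1) ^ 2 * ((v 2) ^ 2 + 2 * v 0 * v 2) = 0 := by
      have := mul_eq_zero.mp (by linear_combination h1 : Complex.I * ((v 1) ^ 2 * ((v 2) ^ 2 + 2 * v 0 * v 2)) = 0)
      tauto
    have : (v 1) ^ 2 * (v 0) ^ 2 = 0 := by
      rw [hv2] at h1'; linear_combination -h1'
    rcases mul_eq_zero.mp this with h | h
    · left; exact pow_eq_zero_iff (n := 2) (by norm_num) |>.mp h
    · right
      have h0' : v 0 = 0 := pow_eq_zero_iff (n := 2) (by norm_num) |>.mp h
      exact ⟨h0', by rw [hv2, h0', neg_zero]⟩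
  -- projections
  set P : Fin 4 → ((Fin 4 → ℂ) →L[ℂ] ℂ) := fun i => ContinuousLinearMap.proj i with hP
  -- derivative of the middle component is zero at v
  have hf : HasFDerivAt (fun w : Fin 4 → ℂ =>
      Complex.I * (w 1) ^ 2 * ((w 2) ^ 2 + 2 * w 0 * w 2))
      (0 : (Fin 4 → ℂ) →L[ℂ] ℂ) v := by
    have hC := ((((P 1).hasFDerivAt (x := v)).mul ((P 1).hasFDerivAt)).const_mul
        Complex.I).mul
      ((((P 2).hasFDerivAt (x := v)).mul ((P 2).hasFDerivAt)).add
        ((((P 0).hasFDerivAt (x := v)).const_mul 2).mul ((P 2).hasFDerivAt)))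
    refine (hC.congr_fderiv ?_).congr_of_eventuallyEq (Filter.Eventually.of_forall fun w => ?_)
    swap
    · simp only [hP, ContinuousLinearMap.proj_apply, Pi.mul_apply, Pi.add_apply]
      ring
    ext u
    simp only [hP, ContinuousLinearMap.proj_apply, ContinuousLinearMap.zero_apply,
      ContinuousLinearMap.add_apply, ContinuousLinearMap.smul_apply,
      ContinuousLinearMap.coe_smul', Pi.smul_apply, smul_eq_mul, Pi.mul_apply, Pi.add_apply,
      Pi.pow_apply]
    rcases hcases with h | ⟨ha, hb⟩
    · rw [h]; ring
    · rw [ha, hb]; ring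
  -- full derivative
  set L : (Fin 4 → ℂ) →L[ℂ] (Fin 3 → ℂ) :=
    ContinuousLinearMap.pi ![P 0 + P 2, 0, P 1 + P 3] with hL
  have hG : HasFDerivAt G L v := by
    apply hasFDerivAt_pi''
    intro i
    fin_cases i
    · have : HasFDerivAt (fun w : Fin 4 → ℂ => w 0 + w 2) (P 0 + P 2) v :=
        ((P 0).hasFDerivAt).add ((P 2).hasFDerivAt)
      exact this
    · exact hf
    · have : HasFDerivAt (fun w : Fin 4 → ℂ => w 1 + w 3) (P 1 + P 3) v :=
        ((P 1).hasFDerivAt).add ((P 3).hasFDerivAt)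
      exact this
  rw [hG.fderiv] at hsurj
  obtain ⟨u, hu⟩ := hsurj (Pi.single 1 1)
  have : L u 1 = 0 := by simp [hL, ContinuousLinearMap.pi_apply]
  rw [hu] at this
  simp [Pi.single_apply] at this
end
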